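/- Let P be a GR-process of a net N compatible with a firing sequence σ, and let σ'' be a finite prefix of σ. Then there exists a finite GR-process P'' of N which is a prefix of P and compatible with σ''. -/

import Mathlib

open Relation

/-- A place/transition net with place type `S` and transition type `T`. -/
structure Net (S T : Type) where
  /-- arc weight from place `s` to transition `t` -/
  pre : T → S → ℕ
  /-- arc weight from transition `t` to place `s` -/
  post : T → S → ℕ
  /-- the initial marking -/
  M0 : S → ℕ
  pre_finite : ∀ t, {s | pre t s > 0}.Finite
  pre_nonempty : ∀ t, ∃ s, pre t s > 0
  post_finite : ∀ t, {s | post t s > 0}.Finite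

namespace Net

variable {S T : Type} (N : Net S T)

/-- the singleton step `{t}` is enabled at marking `M` -/
def Enabled (t : T) (M : S → ℕ) : Prop := ∀ s, N.pre t s ≤ M s

/-- the two-element multiset step `{t,u}` is enabled at marking `M` -/
def Enabled2 (t u : T) (M : S → ℕ) : Prop := ∀ s, N.pre t s + N.pre u s ≤ M s

/-- firing transition `t` leads from marking `M` to marking `M'` -/
def Fires (t : T) (M M' : S → ℕ) : Prop :=
  N.Enabled t M ∧ M' = fun s => M s - N.pre t s + N.post t s

/-- firing the finite transition sequence `σ` leads from `M` to `M'` -/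
inductive FiresList : (S → ℕ) → List T → (S → ℕ) → Prop
  | nil (M : S → ℕ) : FiresList M [] M
  | cons {M M₁ M' : S → ℕ} {t : T} {σ : List T} :
      N.Fires t M M₁ → FiresList M₁ σ M' → FiresList M (t :: σ) M'

/-- a marking is reachable -/
def Reachable (M : S → ℕ) : Prop := ∃ σ : List T, N.FiresList N.M0 σ M

/-- `σ` is a finite firing sequence of `N` -/
def FS (σ : List T) : Prop := ∃ M, N.FiresList N.M0 σ M

/-- `σ` is a (possibly infinite) firing sequence of `N` -/
def FSInf (σ : Stream'.Seq T) : Prop := ∀ n, N.FS (σ.take n)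

/-- adjacency `≡₀` on finite firing sequences -/
def Adj (σ ρ : List T) : Prop :=
  ∃ (α β : List T) (t u : T) (M : S → ℕ),
    σ = α ++ t :: u :: β ∧ ρ = α ++ u :: t :: β ∧
    N.FiresList N.M0 α M ∧ N.Enabled2 t u M ∧ N.FS σ ∧ N.FS ρ

/-- adjacency `≡₀` on possibly infinite firing sequences -/
def AdjSeq (σ ρ : Stream'.Seq T) : Prop :=
  ∃ (α : List T) (β : Stream'.Seq T) (t u : T) (M : S → ℕ),
    σ = (Stream'.Seq.ofList (α ++ [t, u])).append β ∧
    ρ = (Stream'.Seq.ofList (α ++ [u, t])).append β ∧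
    N.FiresList N.M0 α M ∧ N.Enabled2 t u M ∧ N.FSInf σ ∧ N.FSInf ρ

end Net

/-- the finite sequence `l` is a prefix of the possibly infinite sequence `s` -/
def ListPrefixSeq {T : Type} (l : List T) (s : Stream'.Seq T) : Prop :=
  s.take l.length = l

namespace Net

variable {S T : Type} (N : Net S T)

/-- the preorder `⊑₀^∞` on possibly infinite firing sequences -/
def Sqsubseteq0 (σ ρ : Stream'.Seq T) : Prop :=
  ∀ σ'' : List T, N.FS σ'' → ListPrefixSeq σ'' σ →
    ∃ σ' ρ' : List T, N.FS σ' ∧ N.FS ρ' ∧ σ'' <+: σ' ∧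
      ReflTransGen N.Adj σ' ρ' ∧ ListPrefixSeq ρ' ρ

end Net

/-- the data of a candidate GR-process: an occurrence net labelled over `N`,
with process places drawn from `PS` and process transitions from `PT`. -/
structure GRProcessData (S T PS PT : Type) where
  places : Set PS
  trans : Set PT
  /-- `preRel s t`: there is an arc from place `s` to transition `t` -/
  preRel : PS → PT → Prop
  /-- `postRel t s`: there is an arc from transition `t` to place `s` -/
  postRel : PT → PS → Prop
  piS : PS → S
  piT : PT → T

namespace GRProcessData

variable {S T PS PT : Type}

/-- the flow relation of the occurrence net -/
def flow (P : GRProcessData S T PS PT) : (PS ⊕ PT) → (PS ⊕ PT) → Prop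
  | Sum.inl s, Sum.inr t => P.preRel s t
  | Sum.inr t, Sum.inl s => P.postRel t s
  | _, _ => False

/-- the places with empty preset, carrying the initial marking -/
def initialPlaces (P : GRProcessData S T PS PT) : Set PS :=
  {s | s ∈ P.places ∧ ∀ t, ¬ P.postRel t s}

/-- `P` is a GR-process of the net `N` -/
structure IsGRProcess (N : Net S T) (P : GRProcessData S T PS PT) : Prop where
  pre_support : ∀ s t, P.preRel s t → s ∈ P.places ∧ t ∈ P.trans
  post_support : ∀ t s, P.postRel t s → s ∈ P.places ∧ t ∈ P.trans
  place_pre_unique : ∀ s t t', P.postRel t s → P.postRel t' s → t = t'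
  place_post_unique : ∀ s t t', P.preRel s t → P.preRel s t' → t = t'
  acyclic : ∀ x, ¬ Relation.TransGen P.flow x x
  fin_causes : ∀ u ∈ P.trans, {t : PT | Relation.TransGen P.flow (Sum.inr t) (Sum.inr u)}.Finite
  init_marking : ∀ a : S, ({s | s ∈ P.initialPlaces ∧ P.piS s = a}).Finite ∧
    N.M0 a = Set.ncard {s | s ∈ P.initialPlaces ∧ P.piS s = a}
  pre_match : ∀ t ∈ P.trans, ∀ a : S, ({s | P.preRel s t ∧ P.piS s = a}).Finite ∧
    N.pre (P.piT t) a = Set.ncard {s | P.preRel s t ∧ P.piS s = a}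
  post_match : ∀ t ∈ P.trans, ∀ a : S, ({s | P.postRel t s ∧ P.piS s = a}).Finite ∧
    N.post (P.piT t) a = Set.ncard {s | P.postRel t s ∧ P.piS s = a}

/-- `P''` is a prefix of `P'` -/
def IsPrefixOf (P'' P' : GRProcessData S T PS PT) : Prop :=
  P''.places ⊆ P'.places ∧ P''.trans ⊆ P'.trans ∧
  (∀ s ∈ P''.places, ∀ t ∈ P''.trans,
    (P''.preRel s t ↔ P'.preRel s t) ∧ (P''.postRel t s ↔ P'.postRel t s)) ∧
  (∀ s ∈ P''.places, P''.piS s = P'.piS s) ∧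
  (∀ t ∈ P''.trans, P''.piT t = P'.piT t) ∧
  P''.initialPlaces = P'.initialPlaces

/-- a process `P` is compatible with the (possibly infinite) transition
sequence `σ` via an order-respecting bijection `pos`. -/
def Compatible (P : GRProcessData S T PS PT) (σ : Stream'.Seq T) : Prop :=
  ∃ pos : PT → ℕ,
    (∀ t ∈ P.trans, σ.get? (pos t) = some (P.piT t)) ∧
    (∀ t ∈ P.trans, ∀ u ∈ P.trans, pos t = pos u → t = u) ∧
    (∀ i, (σ.get? i).isSome → ∃ t ∈ P.trans, pos t = i) ∧
    (∀ t ∈ P.trans, ∀ u ∈ P.trans,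
      Relation.TransGen P.flow (Sum.inr t) (Sum.inr u) → pos t < pos u)

end GRProcessData

section Aux

lemma seq_take_get? {α : Type*} (s : Stream'.Seq α) (n i : ℕ) (h : i < n) :
    (s.take n)[i]? = s.get? i := by
  rw [Stream'.Seq.getElem?_take, if_pos h]

end Aux

theorem prefix_down_fs {S T PS PT : Type} (N : Net S T)
    (P : GRProcessData S T PS PT) (hP : GRProcessData.IsGRProcess N P)
    (σ : Stream'.Seq T) (hσ : N.FSInf σ) (hcomp : P.Compatible σ)
    (σ'' : List T) (h'' : N.FS σ'') (hpre : ListPrefixSeq σ'' σ) :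
    ∃ P'' : GRProcessData S T PS PT,
      GRProcessData.IsGRProcess N P'' ∧ P''.trans.Finite ∧
      P''.IsPrefixOf P ∧ P''.Compatible (Stream'.Seq.ofList σ'') := by
  classical
  obtain ⟨pos, hlab, hinj, hsurj, hord⟩ := hcomp
  set n := σ''.length with hn
  -- the restricted transition set
  set Tr : Set PT := {t | t ∈ P.trans ∧ pos t < n} with hTr
  -- restricted places
  set Pl : Set PS := {s | s ∈ P.places ∧ ((∀ t, ¬ P.postRel t s) ∨ ∃ t ∈ Tr, P.postRel t s)}
    with hPl
  set P'' : GRProcessData S T PS PT := ⟨Pl, Tr, fun s t => P.preRel s t ∧ t ∈ Tr,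
    fun t s => P.postRel t s ∧ t ∈ Tr, P.piS, P.piT⟩ with hP''def
  have hflow : ∀ x y, P''.flow x y → P.flow x y := by
    rintro (s | t) (s' | t') h
    · exact h.elim
    · exact h.1
    · exact h.1
    · exact h.elim
  -- preset places of transitions in Tr lie in Pl
  have hplace_pre : ∀ s t, P.preRel s t → t ∈ Tr → s ∈ Pl := by
    intro s t hst ht
    refine ⟨(hP.pre_support s t hst).1, ?_⟩
    by_cases hini : ∀ u, ¬ P.postRel u s
    · exact Or.inl hini
    · push_neg at hini
      obtain ⟨u, hu⟩ := hini
      have htg : Relation.TransGen P.flow (Sum.inr u) (Sum.inr t) :=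
        Relation.TransGen.head (show P.flow (Sum.inr u) (Sum.inl s) from hu)
          (Relation.TransGen.single (show P.flow (Sum.inl s) (Sum.inr t) from hst))
      have huT : u ∈ P.trans := (hP.post_support u s hu).2
      exact Or.inr ⟨u, ⟨huT, lt_trans (hord u huT t ht.1 htg) ht.2⟩, hu⟩
  have hInit : P''.initialPlaces = P.initialPlaces := by
    ext s
    constructor
    · rintro ⟨⟨hsP, hcase⟩, hno⟩
      rcases hcase with h | ⟨u, huTr, hpost⟩
      · exact ⟨hsP, h⟩
      · exact absurd ⟨hpost, huTr⟩ (hno u)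
    · rintro ⟨hsP, hno⟩
      exact ⟨⟨hsP, Or.inl hno⟩, fun t ht => hno t ht.1⟩
  refine ⟨P'', ?_, ?_, ?_, ?_⟩
  · constructor
    · rintro s t ⟨h, ht⟩
      exact ⟨hplace_pre s t h ht, ht⟩
    · rintro t s ⟨h, ht⟩
      exact ⟨⟨(hP.post_support t s h).1, Or.inr ⟨t, ht, h⟩⟩, ht⟩
    · exact fun s t t' h h' => hP.place_pre_unique s t t' h.1 h'.1
    · exact fun s t t' h h' => hP.place_post_unique s t t' h.1 h'.1
    · exact fun x hx => hP.acyclic x (Relation.TransGen.mono hflow _ _ hx)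
    · exact fun u hu => Set.Finite.subset (hP.fin_causes u hu.1)
        (fun t ht => Relation.TransGen.mono hflow _ _ ht)
    · intro a
      have hs : {s | s ∈ P''.initialPlaces ∧ P''.piS s = a}
          = {s | s ∈ P.initialPlaces ∧ P.piS s = a} := by rw [hInit]
      rw [hs]
      exact hP.init_marking a
    · intro t ht a
      have hs : {s | P''.preRel s t ∧ P''.piS s = a} = {s | P.preRel s t ∧ P.piS s = a} := by
        ext s
        exact ⟨fun ⟨⟨h, _⟩, h2⟩ => ⟨h, h2⟩, fun ⟨h, h2⟩ => ⟨⟨h, ht⟩, h2⟩⟩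
      rw [hs]
      exact hP.pre_match t ht.1 a
    · intro t ht a
      have hs : {s | P''.postRel t s ∧ P''.piS s = a} = {s | P.postRel t s ∧ P.piS s = a} := by
        ext s
        exact ⟨fun ⟨⟨h, _⟩, h2⟩ => ⟨h, h2⟩, fun ⟨h, h2⟩ => ⟨⟨h, ht⟩, h2⟩⟩
      rw [hs]
      exact hP.post_match t ht.1 a
  · have himg : (pos '' Tr).Finite :=
      (Set.finite_Iio n).subset (by rintro _ ⟨t, ⟨_, h⟩, rfl⟩; exact h)
    exact Set.Finite.of_finite_image himg (fun t ht u hu h => hinj t ht.1 u hu.1 h)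
  · exact ⟨fun s hs => hs.1, fun t ht => ht.1,
      fun s _ t ht => ⟨⟨fun h => h.1, fun h => ⟨h, ht⟩⟩, ⟨fun h => h.1, fun h => ⟨h, ht⟩⟩⟩,
      fun s _ => rfl, fun t _ => rfl, hInit⟩
  · refine ⟨pos, ?_, fun t ht u hu h => hinj t ht.1 u hu.1 h, ?_,
      fun t ht u hu h => hord t ht.1 u hu.1 (Relation.TransGen.mono hflow _ _ h)⟩
    · intro t ht
      have h1 := hlab t ht.1
      rw [Stream'.Seq.ofList_get?, ← hpre, seq_take_get? σ n (pos t) ht.2]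
      exact h1
    · intro i hi
      rw [Stream'.Seq.ofList_get?] at hi
      have hilt : i < n := by
        by_contra hno
        rw [List.getElem?_eq_none (le_of_not_gt hno)] at hi
        simp at hi
      have hsome : (σ.get? i).isSome := by
        rw [← seq_take_get? σ n i hilt]
        exact hpre ▸ hi
      obtain ⟨t, htP, hti⟩ := hsurj i hsome
      exact ⟨t, ⟨htP, hti ▸ hilt⟩, hti⟩
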